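/- Let u: R^{p+1} -> R be bounded measurable and suppose E[R * u(X̃) * f(W) * <X, v>] = 0 for every bounded measurable f: R^d -> R. Then E[u(X̃) <X, v> | sigma(W)] = 0 almost surely under the conditional probability measure P(. | R = 1). Consequently, if u_1 and u_2 are two bounded solutions of the weighting equation, their difference h = u_1 - u_2 satisfies E[h(X̃) <X, v> | sigma(W)] = 0 under P(. | R = 1), so that (on the event where m_1(W) := E[<X, v> | sigma(W)] under P(. | R = 1) is nonzero) h = Th; this yields the characterization of the full solution set of the weighting equation as pi_*^{-1} + {Th : h in L2(X̃)}. (Uniqueness/characterization part of Theorem 2.) -/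

import Mathlib

open MeasureTheory ProbabilityTheory Matrix

/-- `X̃ = (Z, X) ∈ ℝ^{p+1}`, the surrogate stacked on top of the covariates. -/
noncomputable def tilde {Ω : Type*} {p : ℕ} (Z : Ω → ℝ) (X : Ω → Fin p → ℝ) (ω : Ω) :
    Fin (p + 1) → ℝ := Fin.cons (Z ω) (X ω)

/-- `Γᵀ x` for a `(p+1) × d` matrix `Γ` and `x ∈ ℝ^{p+1}`. -/
noncomputable def matT {n d : ℕ} (Γ : Matrix (Fin n) (Fin d) ℝ) (x : Fin n → ℝ) : Fin d → ℝ :=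
  fun j => ∑ i, Γ i j * x i

/-- A measurable `u : ℝ^{p+1} → ℝ` solves the weighting equation if
`E[(R u(X̃) - 1) f(W) ⟨X, v⟩] = 0` for every bounded measurable `f : ℝ^d → ℝ`. -/
def SolvesWeighting {Ω : Type*} [MeasurableSpace Ω] (P : Measure Ω) {p d : ℕ}
    (X : Ω → Fin p → ℝ) (Z R : Ω → ℝ) (Γ : Matrix (Fin (p + 1)) (Fin d) ℝ) (v : Fin p → ℝ)
    (u : (Fin (p + 1) → ℝ) → ℝ) : Prop :=
  ∀ f : (Fin d → ℝ) → ℝ, Measurable f → (∃ C, ∀ w, |f w| ≤ C) →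
    ∫ ω, (R ω * u (tilde Z X ω) - 1) * f (matT Γ (tilde Z X ω)) * (X ω ⬝ᵥ v) ∂P = 0

lemma abs_mul3_le {a b c A B C : ℝ} (ha : |a| ≤ A) (hb : |b| ≤ B) (hc : |c| ≤ C) :
    |a * b * c| ≤ A * B * C := by
  rw [abs_mul, abs_mul]
  have hA := (abs_nonneg a).trans ha
  have hB := (abs_nonneg b).trans hb
  exact mul_le_mul (mul_le_mul ha hb (abs_nonneg b) hA) hc (abs_nonneg c) (by positivity)

lemma integrable_of_bdd {Ω : Type*} [MeasurableSpace Ω] (μ : Measure Ω) [IsFiniteMeasure μ]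
    {g : Ω → ℝ} (hg : Measurable g) (C : ℝ) (hb : ∀ ω, |g ω| ≤ C) : Integrable g μ :=
  ⟨hg.aestronglyMeasurable, HasFiniteIntegral.of_bounded (C := C) (ae_of_all _ hb)⟩

lemma measurable_tilde {Ω : Type*} [MeasurableSpace Ω] {p : ℕ} {Z : Ω → ℝ} {X : Ω → Fin p → ℝ}
    (hZ : Measurable Z) (hX : Measurable X) : Measurable (tilde Z X) := by
  rw [measurable_pi_iff]
  intro i
  refine Fin.cases ?_ ?_ i
  · simpa [tilde] using hZ
  · intro j; simpa [tilde, Function.comp_def] using (measurable_pi_apply j).comp hX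

lemma measurable_matT {n d : ℕ} (Γ : Matrix (Fin n) (Fin d) ℝ) : Measurable (matT Γ) := by
  rw [measurable_pi_iff]
  intro j
  exact Finset.measurable_sum _ fun i _ => (measurable_const.mul (measurable_pi_apply i))

/-- Main part: if `E[R u(X̃) f(W) ⟨X,v⟩] = 0` for all bounded measurable `f`, then the
conditional expectation of `u(X̃)⟨X,v⟩` given `σ(W)` vanishes under `P(·|R=1)`. -/
lemma condexp_vanish
    {Ω : Type*} [MeasurableSpace Ω] {P : Measure Ω}
    [IsProbabilityMeasure P] {p d : ℕ}
    (X : Ω → Fin p → ℝ) (Z R : Ω → ℝ)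
    (hX : Measurable X) (hZ : Measurable Z) (hR : Measurable R)
    (hXbd : ∃ C, ∀ ω i, |X ω i| ≤ C)
    (hR01 : ∀ ω, R ω = 0 ∨ R ω = 1)
    (hρpos : 0 < P {ω | R ω = 1})
    (Γ : Matrix (Fin (p + 1)) (Fin d) ℝ) (v : Fin p → ℝ)
    (u : (Fin (p + 1) → ℝ) → ℝ) (hu : Measurable u) (hubd : ∃ C, ∀ x, |u x| ≤ C)
    (hyp : ∀ f : (Fin d → ℝ) → ℝ, Measurable f → (∃ C, ∀ w, |f w| ≤ C) →
      ∫ ω, R ω * u (tilde Z X ω) * f (matT Γ (tilde Z X ω)) * (X ω ⬝ᵥ v) ∂P = 0) :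
    (P[|{ω | R ω = 1}])[fun ω => u (tilde Z X ω) * (X ω ⬝ᵥ v) |
        MeasurableSpace.comap (fun ω => matT Γ (tilde Z X ω)) inferInstance]
      =ᵐ[P[|{ω | R ω = 1}]] 0 := by
  obtain ⟨Cx, hCx⟩ := hXbd
  obtain ⟨Cu, hCu⟩ := hubd
  set A : Set Ω := {ω | R ω = 1} with hA_def
  have hA : MeasurableSet A := hR (measurableSet_singleton 1)
  set W : Ω → Fin d → ℝ := fun ω => matT Γ (tilde Z X ω) with hW_def
  have hWm : Measurable W := (measurable_matT Γ).comp (measurable_tilde hZ hX)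
  set μ : Measure Ω := P[|A] with hμ_def
  haveI : IsProbabilityMeasure μ := cond_isProbabilityMeasure hρpos.ne'
  set g : Ω → ℝ := fun ω => u (tilde Z X ω) * (X ω ⬝ᵥ v) with hg_def
  have hgm : Measurable g := by
    exact (hu.comp (measurable_tilde hZ hX)).mul
      (Finset.measurable_sum _ fun i _ => ((measurable_pi_apply i).comp hX).mul measurable_const)
  have hdot : ∀ ω, |X ω ⬝ᵥ v| ≤ Cx * ∑ i, |v i| := by
    intro ω
    calc |X ω ⬝ᵥ v| ≤ ∑ i, |X ω i * v i| := Finset.abs_sum_le_sum_abs _ _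
      _ ≤ ∑ i, Cx * |v i| := Finset.sum_le_sum fun i _ => by
          rw [abs_mul]; exact mul_le_mul_of_nonneg_right (hCx ω i) (abs_nonneg _)
      _ = Cx * ∑ i, |v i| := by rw [Finset.mul_sum]
  have hgbd : ∀ ω, |g ω| ≤ Cu * (Cx * ∑ i, |v i|) := by
    intro ω
    rw [hg_def, abs_mul]
    exact mul_le_mul (hCu (tilde Z X ω)) (hdot ω) (abs_nonneg _) ((abs_nonneg (u (tilde Z X ω))).trans (hCu (tilde Z X ω)))
  have hgint : Integrable g μ := integrable_of_bdd μ hgm _ hgbd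
  have hm : MeasurableSpace.comap W inferInstance ≤ (inferInstance : MeasurableSpace Ω) :=
    hWm.comap_le
  have key : ∀ s : Set Ω, MeasurableSet[MeasurableSpace.comap W inferInstance] s →
      ∫ x in s, g x ∂μ = 0 := by
    rintro s ⟨t, ht, rfl⟩
    have hsm : MeasurableSet (W ⁻¹' t) := hWm ht
    have h1 : ∫ x in W ⁻¹' t, g x ∂μ
        = (P A)⁻¹.toReal • ∫ x in W ⁻¹' t ∩ A, g x ∂P := by
      rw [hμ_def, ProbabilityTheory.cond, Measure.restrict_smul, integral_smul_measure,
        Measure.restrict_restrict hsm]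
    have h2 : ∫ x in W ⁻¹' t ∩ A, g x ∂P
        = ∫ ω, R ω * u (tilde Z X ω) * (t.indicator (fun _ => (1:ℝ)) (W ω)) * (X ω ⬝ᵥ v) ∂P := by
      rw [← integral_indicator (hsm.inter hA)]
      congr 1
      funext ω
      rcases hR01 ω with h0 | h1
      · have : ω ∉ A := by simp [hA_def, h0]
        by_cases hw : W ω ∈ t <;>
          simp [Set.indicator_apply, hw, this, h0]
      · have hmem : ω ∈ A := h1
        by_cases hw : W ω ∈ t <;>
          simp [Set.indicator_apply, hw, hmem, h1, hg_def, mul_comm, mul_assoc, mul_left_comm]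
    have h3 : ∫ ω, R ω * u (tilde Z X ω) * (t.indicator (fun _ => (1:ℝ)) (W ω)) * (X ω ⬝ᵥ v) ∂P
        = 0 := by
      refine hyp (t.indicator fun _ => (1:ℝ)) (measurable_const.indicator ht) ⟨1, fun w => ?_⟩
      by_cases hw : w ∈ t <;> simp [Set.indicator_apply, hw]
    rw [h1, h2, h3, smul_zero]
  haveI : SigmaFinite (μ.trim hm) := by infer_instance
  have h0 : (fun _ : Ω => (0:ℝ)) =ᵐ[μ] μ[g | MeasurableSpace.comap W inferInstance] := by
    refine ae_eq_condExp_of_forall_setIntegral_eq hm hgint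
      (fun s _ _ => (integrable_zero _ _ _).integrableOn) (fun s hs _ => ?_) ?_
    · rw [key s hs]; simp
    · exact StronglyMeasurable.aestronglyMeasurable (stronglyMeasurable_const)
  exact h0.symm

/-- **uniqueness/characterization part of Theorem 2.** If `u` is bounded
measurable with `E[R u(X̃) f(W) ⟨X, v⟩] = 0` for every bounded measurable `f`, then
`E[u(X̃) ⟨X, v⟩ ∣ σ(W)] = 0` a.s. under `P(· ∣ R = 1)`.  Consequently, if `u₁, u₂` are two
bounded solutions of the weighting equation, their difference `h = u₁ - u₂` satisfies
`E[h(X̃) ⟨X, v⟩ ∣ σ(W)] = 0` under `P(· ∣ R = 1)`, so that on the event `{m₁(W) ≠ 0}` one has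
`h = 𝒯h`; this yields the characterization of the solution set as `π_*⁻¹ + {𝒯h : h ∈ L²(X̃)}`. -/
theorem weighting_equation_solution_characterization
    {Ω : Type*} [MeasurableSpace Ω] {P : Measure Ω}
    [IsProbabilityMeasure P] {p d : ℕ}
    (X : Ω → Fin p → ℝ) (Z R : Ω → ℝ)
    (hX : Measurable X) (hZ : Measurable Z) (hR : Measurable R)
    (hXbd : ∃ C, ∀ ω i, |X ω i| ≤ C) (hZbd : ∃ C, ∀ ω, |Z ω| ≤ C)
    (hR01 : ∀ ω, R ω = 0 ∨ R ω = 1)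
    (hρpos : 0 < P {ω | R ω = 1})
    (Γ : Matrix (Fin (p + 1)) (Fin d) ℝ) (v : Fin p → ℝ) :
    (∀ u : (Fin (p + 1) → ℝ) → ℝ, Measurable u → (∃ C, ∀ x, |u x| ≤ C) →
        (∀ f : (Fin d → ℝ) → ℝ, Measurable f → (∃ C, ∀ w, |f w| ≤ C) →
          ∫ ω, R ω * u (tilde Z X ω) * f (matT Γ (tilde Z X ω)) * (X ω ⬝ᵥ v) ∂P = 0) →
        (P[|{ω | R ω = 1}])[fun ω => u (tilde Z X ω) * (X ω ⬝ᵥ v) |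
            MeasurableSpace.comap (fun ω => matT Γ (tilde Z X ω)) inferInstance]
          =ᵐ[P[|{ω | R ω = 1}]] 0) ∧
      ∀ u₁ u₂ : (Fin (p + 1) → ℝ) → ℝ, Measurable u₁ → Measurable u₂ →
        (∃ C, ∀ x, |u₁ x| ≤ C) → (∃ C, ∀ x, |u₂ x| ≤ C) →
        SolvesWeighting P X Z R Γ v u₁ → SolvesWeighting P X Z R Γ v u₂ →
        ((P[|{ω | R ω = 1}])[fun ω => (u₁ (tilde Z X ω) - u₂ (tilde Z X ω)) * (X ω ⬝ᵥ v) |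
            MeasurableSpace.comap (fun ω => matT Γ (tilde Z X ω)) inferInstance]
          =ᵐ[P[|{ω | R ω = 1}]] 0) ∧
        -- so that `h = 𝒯h` on the event where `m₁(W) ≠ 0`, for any versions `m_h`, `m₁`
        ∀ mh m1 : (Fin d → ℝ) → ℝ, Measurable mh → Measurable m1 →
          ((fun ω => mh (matT Γ (tilde Z X ω))) =ᵐ[P[|{ω | R ω = 1}]]
            (P[|{ω | R ω = 1}])[fun ω =>
                (u₁ (tilde Z X ω) - u₂ (tilde Z X ω)) * (X ω ⬝ᵥ v) |
              MeasurableSpace.comap (fun ω => matT Γ (tilde Z X ω)) inferInstance]) →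
          ((fun ω => m1 (matT Γ (tilde Z X ω))) =ᵐ[P[|{ω | R ω = 1}]]
            (P[|{ω | R ω = 1}])[fun ω => X ω ⬝ᵥ v |
              MeasurableSpace.comap (fun ω => matT Γ (tilde Z X ω)) inferInstance]) →
          ∀ᵐ ω ∂(P[|{ω | R ω = 1}]), m1 (matT Γ (tilde Z X ω)) ≠ 0 →
            u₁ (tilde Z X ω) - u₂ (tilde Z X ω)
              = (u₁ (tilde Z X ω) - u₂ (tilde Z X ω))
                - mh (matT Γ (tilde Z X ω)) / m1 (matT Γ (tilde Z X ω)) := by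
  have htilde : Measurable (tilde Z X) := measurable_tilde hZ hX
  have hWm : Measurable (fun ω => matT Γ (tilde Z X ω)) :=
    (measurable_matT Γ).comp htilde
  obtain ⟨Cx, hCx⟩ := hXbd
  have hdot : ∀ ω, |X ω ⬝ᵥ v| ≤ Cx * ∑ i, |v i| := by
    intro ω
    calc |X ω ⬝ᵥ v| ≤ ∑ i, |X ω i * v i| := Finset.abs_sum_le_sum_abs _ _
      _ ≤ ∑ i, Cx * |v i| := Finset.sum_le_sum fun i _ => by
          rw [abs_mul]; exact mul_le_mul_of_nonneg_right (hCx ω i) (abs_nonneg _)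
      _ = Cx * ∑ i, |v i| := by rw [Finset.mul_sum]
  have hdotm : Measurable (fun ω => X ω ⬝ᵥ v) :=
    Finset.measurable_sum _ fun i _ => ((measurable_pi_apply i).comp hX).mul measurable_const
  have hRbd : ∀ ω, |R ω| ≤ 1 := by
    intro ω; rcases hR01 ω with h | h <;> simp [h]
  have part1 : ∀ u : (Fin (p + 1) → ℝ) → ℝ, Measurable u → (∃ C, ∀ x, |u x| ≤ C) →
      (∀ f : (Fin d → ℝ) → ℝ, Measurable f → (∃ C, ∀ w, |f w| ≤ C) →
        ∫ ω, R ω * u (tilde Z X ω) * f (matT Γ (tilde Z X ω)) * (X ω ⬝ᵥ v) ∂P = 0) →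
      (P[|{ω | R ω = 1}])[fun ω => u (tilde Z X ω) * (X ω ⬝ᵥ v) |
          MeasurableSpace.comap (fun ω => matT Γ (tilde Z X ω)) inferInstance]
        =ᵐ[P[|{ω | R ω = 1}]] 0 := fun u hu hubd hyp =>
    condexp_vanish X Z R hX hZ hR ⟨Cx, hCx⟩ hR01 hρpos Γ v u hu hubd hyp
  refine ⟨part1, ?_⟩
  intro u₁ u₂ hu₁ hu₂ hu₁bd hu₂bd hs₁ hs₂
  obtain ⟨C₁, hC₁⟩ := hu₁bd
  obtain ⟨C₂, hC₂⟩ := hu₂bd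
  -- the difference satisfies the hypothesis of part1
  have hdiff : ∀ f : (Fin d → ℝ) → ℝ, Measurable f → (∃ C, ∀ w, |f w| ≤ C) →
      ∫ ω, R ω * (u₁ (tilde Z X ω) - u₂ (tilde Z X ω)) * f (matT Γ (tilde Z X ω))
        * (X ω ⬝ᵥ v) ∂P = 0 := by
    intro f hf hfbd
    obtain ⟨Cf, hCf⟩ := hfbd
    have hint : ∀ (u : (Fin (p + 1) → ℝ) → ℝ) (Cu : ℝ), Measurable u → (∀ x, |u x| ≤ Cu) →
        Integrable (fun ω => (R ω * u (tilde Z X ω) - 1) * f (matT Γ (tilde Z X ω))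
          * (X ω ⬝ᵥ v)) P := by
      intro u Cu hu hCu
      refine integrable_of_bdd P ?_ ((Cu + 1) * Cf * (Cx * ∑ i, |v i|)) ?_
      · exact ((hR.mul (hu.comp htilde)).sub measurable_const).mul (hf.comp hWm) |>.mul hdotm
      · intro ω
        refine abs_mul3_le ?_ (hCf _) (hdot ω)
        calc |R ω * u (tilde Z X ω) - 1| ≤ |R ω * u (tilde Z X ω)| + 1 := by
              have := abs_sub (R ω * u (tilde Z X ω)) 1
              calc |R ω * u (tilde Z X ω) - 1|
                  ≤ |R ω * u (tilde Z X ω)| + |(1:ℝ)| := abs_sub _ _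
                _ = |R ω * u (tilde Z X ω)| + 1 := by rw [abs_one]
          _ ≤ Cu + 1 := by
              have h1 : |R ω * u (tilde Z X ω)| ≤ Cu := by
                rw [abs_mul]
                calc |R ω| * |u (tilde Z X ω)| ≤ 1 * Cu :=
                      mul_le_mul (hRbd ω) (hCu _) (abs_nonneg _) zero_le_one
                  _ = Cu := one_mul Cu
              linarith
    have h₁ := hs₁ f hf ⟨Cf, hCf⟩
    have h₂ := hs₂ f hf ⟨Cf, hCf⟩
    have heq : (fun ω => R ω * (u₁ (tilde Z X ω) - u₂ (tilde Z X ω))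
          * f (matT Γ (tilde Z X ω)) * (X ω ⬝ᵥ v))
        = fun ω => (R ω * u₁ (tilde Z X ω) - 1) * f (matT Γ (tilde Z X ω)) * (X ω ⬝ᵥ v)
          - (R ω * u₂ (tilde Z X ω) - 1) * f (matT Γ (tilde Z X ω)) * (X ω ⬝ᵥ v) := by
      funext ω; ring
    rw [heq, integral_sub (hint u₁ C₁ hu₁ hC₁) (hint u₂ C₂ hu₂ hC₂), h₁, h₂, sub_zero]
  have hdm : Measurable (fun x => u₁ x - u₂ x) := hu₁.sub hu₂
  have hdbd : ∃ C, ∀ x, |u₁ x - u₂ x| ≤ C := by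
    refine ⟨C₁ + C₂, fun x => ?_⟩
    calc |u₁ x - u₂ x| ≤ |u₁ x| + |u₂ x| := abs_sub _ _
      _ ≤ C₁ + C₂ := add_le_add (hC₁ x) (hC₂ x)
  have hcond := part1 (fun x => u₁ x - u₂ x) hdm hdbd hdiff
  refine ⟨hcond, ?_⟩
  intro mh m1 hmhm hm1m hmh hm1
  have hmh0 : (fun ω => mh (matT Γ (tilde Z X ω))) =ᵐ[P[|{ω | R ω = 1}]] 0 :=
    hmh.trans hcond
  filter_upwards [hmh0] with ω h hne
  have h0 : mh (matT Γ (tilde Z X ω)) = 0 := h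
  rw [h0, zero_div, sub_zero]
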